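/- arXiv:2106.05245 — 3 statements merged into one kernel-verified Lean document; each statement's English description precedes it below -/
import Mathlib

section
/- Let G be a finite undirected graph with double cover H, and let S ⊆ V_H be a simple set with vol_H(S) > 0. Define L = {u ∈ V_G : u₁ ∈ S} and R = {u ∈ V_G : u₂ ∈ S}. Then L and R are disjoint and β_G(L, R) = Φ_H(S). -/
open Finset

namespace Paper

variable {V : Type*} [Fintype V] [DecidableEq V]

/-- The degree of a vertex `v` in the graph `G`. -/
noncomputable def deg (G : SimpleGraph V) (v : V) : ℕ := {u | G.Adj v u}.ncard

/-- The volume of a set of vertices: the sum of the degrees of its members. -/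
noncomputable def vol (G : SimpleGraph V) (S : Finset V) : ℕ := ∑ v ∈ S, deg G v

/-- The number of ordered pairs `(u,v)` with `u ∈ S`, `v ∈ T` and `{u,v} ∈ E(G)`.
For disjoint `S`, `T` this is the number of edges between `S` and `T`, and
`cutEdges G S Sᶜ = |∂(S)|`. -/
noncomputable def cutEdges (G : SimpleGraph V) (S T : Finset V) : ℕ :=
  {e : V × V | e.1 ∈ S ∧ e.2 ∈ T ∧ G.Adj e.1 e.2}.ncard

/-- The conductance `Φ(S) = |∂(S)| / min(vol(S), vol(V \ S))`. -/
noncomputable def conductance (G : SimpleGraph V) (S : Finset V) : ℝ :=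
  (cutEdges G S Sᶜ : ℝ) / min (vol G S : ℝ) (vol G Sᶜ : ℝ)

/-- The bipartiteness ratio `β(L,R) = 1 - 2 e(L,R) / vol(L ∪ R)`. -/
noncomputable def bipartiteness (G : SimpleGraph V) (L R : Finset V) : ℝ :=
  1 - 2 * (cutEdges G L R : ℝ) / (vol G (L ∪ R) : ℝ)

/-- The double cover of `G`: on vertex set `V ⊕ V` (with `Sum.inl v = v₁` and
`Sum.inr v = v₂`), for every edge `{u,v}` of `G` there are edges `{u₁,v₂}` and `{u₂,v₁}`. -/
def doubleCover (G : SimpleGraph V) : SimpleGraph (V ⊕ V) :=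
  SimpleGraph.fromRel (fun x y => ∃ u v, x = Sum.inl u ∧ y = Sum.inr v ∧ G.Adj u v)

open scoped Classical in
/-- One step of the lazy random walk `W = (1/2)(I + D⁻¹A)`, acting on row vectors:
`p ↦ pW`, so `(lazyWalk G p) x = (1/2) p(x) + (1/2) ∑_{y ~ x} p(y)/deg(y)`. -/
noncomputable def lazyWalk (G : SimpleGraph V) (p : V → ℝ) : V → ℝ :=
  fun x => (1/2) * p x + (1/2) * ∑ y, (if G.Adj y x then p y / (deg G y : ℝ) else 0)

/-- The simplify operator `σ` on vectors indexed by the double cover: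
`(σ∘p)(u₁) = max(0, p(u₁) - p(u₂))` and `(σ∘p)(u₂) = max(0, p(u₂) - p(u₁))`. -/
noncomputable def simplify (p : V ⊕ V → ℝ) : V ⊕ V → ℝ :=
  Sum.elim (fun u => max 0 (p (Sum.inl u) - p (Sum.inr u)))
           (fun u => max 0 (p (Sum.inr u) - p (Sum.inl u)))

/-- `q` is the personalised Pagerank vector `pr(α, s)`, i.e. it satisfies
`q = α s + (1-α) q W`. -/
def IsPagerank (G : SimpleGraph V) (α : ℝ) (s q : V → ℝ) : Prop :=
  ∀ x, q x = α * s x + (1 - α) * lazyWalk G q x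

/-- `p` is an approximate Pagerank vector `apr(α, s, r)` with residual `r`, i.e.
`p + pr(α, r) = pr(α, s)`. -/
def IsApr (G : SimpleGraph V) (α : ℝ) (s r p : V → ℝ) : Prop :=
  ∃ qs qr, IsPagerank G α s qs ∧ IsPagerank G α r qr ∧ ∀ x, p x + qr x = qs x

/-- Given an ordering `ord` of the vertices, the sweep set `S_j` consists of the
first `j` vertices in this ordering. -/
def sweepSet {W : Type*} [Fintype W] (ord : Fin (Fintype.card W) ≃ W) (j : ℕ) :
    Finset W :=
  Finset.univ.filter fun x => (ord.symm x : ℕ) < j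

/-- The size of the support `supp(p) = {u : p(u) ≠ 0}` of a vector. -/
noncomputable def suppCard {W : Type*} (p : W → ℝ) : ℕ := {x | p x ≠ 0}.ncard

/-- The Lovász–Simonovits curve of a vector `p`:
`p[x] = max { ∑_u w(u) p(u) : w ∈ [0,1]^V, ∑_u w(u) deg(u) = x }`. -/
noncomputable def lsCurve (G : SimpleGraph V) (p : V → ℝ) (x : ℝ) : ℝ :=
  sSup {y | ∃ w : V → ℝ, (∀ u, 0 ≤ w u ∧ w u ≤ 1) ∧
    (∑ u, w u * (deg G u : ℝ)) = x ∧ y = ∑ u, w u * p u}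

/-! ### Directed graphs -/

/-- Out-degree of `u` in the digraph with edge relation `E`. -/
noncomputable def degOut (E : V → V → Prop) (u : V) : ℕ := {v | E u v}.ncard

/-- In-degree of `u` in the digraph with edge relation `E`. -/
noncomputable def degIn (E : V → V → Prop) (u : V) : ℕ := {v | E v u}.ncard

/-- Out-volume `vol_out(S) = ∑_{u ∈ S} deg_out(u)`. -/
noncomputable def volOut (E : V → V → Prop) (S : Finset V) : ℕ := ∑ u ∈ S, degOut E u

/-- In-volume `vol_in(S) = ∑_{u ∈ S} deg_in(u)`. -/
noncomputable def volIn (E : V → V → Prop) (S : Finset V) : ℕ := ∑ u ∈ S, degIn E u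

/-- The number of directed edges from `L` to `R`. -/
noncomputable def eDir (E : V → V → Prop) (L R : Finset V) : ℕ :=
  {e : V × V | e.1 ∈ L ∧ e.2 ∈ R ∧ E e.1 e.2}.ncard

/-- The total number of directed edges of the digraph. -/
noncomputable def numEdges (E : V → V → Prop) : ℕ := {e : V × V | E e.1 e.2}.ncard

/-- The flow ratio `F(L,R) = 1 - 2 e(L,R) / (vol_out(L) + vol_in(R))`. -/
noncomputable def flowRatio (E : V → V → Prop) (L R : Finset V) : ℝ :=
  1 - 2 * (eDir E L R : ℝ) / ((volOut E L : ℝ) + (volIn E R : ℝ))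

/-- The semi-double cover of a digraph: on vertex set `V ⊕ V` (with `Sum.inl v = v₁`,
`Sum.inr v = v₂`), for every directed edge `(u,v)` there is an undirected edge `{u₁, v₂}`. -/
def semiDoubleCover (E : V → V → Prop) : SimpleGraph (V ⊕ V) :=
  SimpleGraph.fromRel (fun x y => ∃ u v, x = Sum.inl u ∧ y = Sum.inr v ∧ E u v)

/-! ### The evolving set process -/

/-- `χ_v W χ_S^T`: the probability that one step of the lazy random walk started
at `v` ends in `S`. -/
noncomputable def walkToSet (H : SimpleGraph V) (S : Finset V) (v : V) : ℝ :=
  (1/2) * (if v ∈ S then (1:ℝ) else 0)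
    + (1/2) * (({y | H.Adj v y ∧ y ∈ S}.ncard : ℝ) / (deg H v : ℝ))

/-- The transition kernel `K(S, S')` of the evolving set process: the probability,
over a uniformly random threshold `t ∈ [0,1]`, that `{v : χ_v W χ_S^T ≥ t} = S'`. -/
noncomputable def espKernel (H : SimpleGraph V) (S S' : Finset V) : ℝ :=
  (MeasureTheory.volume {t : ℝ | t ∈ Set.Icc (0:ℝ) 1 ∧
    {v | t ≤ walkToSet H S v} = (S' : Set V)}).toReal

/-- The transition kernel `K̂(S,S') = (vol(S')/vol(S)) K(S,S')` of the volume-biased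
evolving set process. -/
noncomputable def vbKernel (H : SimpleGraph V) (S S' : Finset V) : ℝ :=
  ((vol H S' : ℝ) / (vol H S : ℝ)) * espKernel H S S'

open scoped Classical in
/-- The probability that a sample path `(S₀, …, S_T)` of the volume-biased evolving
set process started from `S₀ = {x}` satisfies the property `P`. -/
noncomputable def pathProb (H : SimpleGraph V) (T : ℕ) (x : V)
    (P : (Fin (T+1) → Finset V) → Prop) : ℝ :=
  ∑ f ∈ Finset.univ.filter (fun f : Fin (T+1) → Finset V => f 0 = {x} ∧ P f),
    ∏ i : Fin T, vbKernel H (f i.castSucc) (f i.succ)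


open scoped Classical

lemma ncard_setOf_aux {α : Type*} [Fintype α] (p : α → Prop) :
    {x | p x}.ncard = (Finset.univ.filter p).card := by
  rw [Set.ncard_eq_toFinset_card', Set.toFinset_setOf]

lemma deg_eq_sum (G : SimpleGraph V) (v : V) :
    deg G v = ∑ u, if G.Adj v u then 1 else 0 := by
  rw [deg, ncard_setOf_aux, Finset.card_filter]

lemma cutEdges_eq_sum (G : SimpleGraph V) (S T : Finset V) :
    cutEdges G S T = ∑ x, ∑ y, if x ∈ S ∧ y ∈ T ∧ G.Adj x y then 1 else 0 := by
  rw [cutEdges, ncard_setOf_aux, Finset.card_filter, Fintype.sum_prod_type]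
  exact Finset.sum_congr rfl fun x _ => Finset.sum_congr rfl fun y _ => by norm_num

lemma dc_ll (G : SimpleGraph V) (u v : V) : ¬ (doubleCover G).Adj (Sum.inl u) (Sum.inl v) := by
  simp [doubleCover, SimpleGraph.fromRel_adj]

lemma dc_rr (G : SimpleGraph V) (u v : V) : ¬ (doubleCover G).Adj (Sum.inr u) (Sum.inr v) := by
  simp [doubleCover, SimpleGraph.fromRel_adj]

lemma dc_lr (G : SimpleGraph V) (u v : V) : (doubleCover G).Adj (Sum.inl u) (Sum.inr v) ↔ G.Adj u v := by
  simp [doubleCover, SimpleGraph.fromRel_adj]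

lemma dc_rl (G : SimpleGraph V) (u v : V) : (doubleCover G).Adj (Sum.inr u) (Sum.inl v) ↔ G.Adj v u := by
  simp [doubleCover, SimpleGraph.fromRel_adj, eq_comm]

lemma deg_dc_inl (G : SimpleGraph V) (u : V) : deg (doubleCover G) (Sum.inl u) = deg G u := by
  rw [deg_eq_sum, deg_eq_sum, Fintype.sum_sum_type]
  simp [dc_ll, dc_lr]

lemma deg_dc_inr (G : SimpleGraph V) (u : V) : deg (doubleCover G) (Sum.inr u) = deg G u := by
  rw [deg_eq_sum, deg_eq_sum, Fintype.sum_sum_type]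
  simp [dc_rr, dc_rl, fun v => (G.adj_comm v u)]

lemma cut_compl_add {W : Type*} [Fintype W] [DecidableEq W] (G : SimpleGraph W) (S : Finset W) :
    cutEdges G S Sᶜ + cutEdges G S S = vol G S := by
  rw [cutEdges_eq_sum, cutEdges_eq_sum, vol, ← Finset.sum_add_distrib]
  have key : ∀ x, ((∑ y, if x ∈ S ∧ y ∈ Sᶜ ∧ G.Adj x y then 1 else 0) +
        ∑ y, if x ∈ S ∧ y ∈ S ∧ G.Adj x y then 1 else 0)
      = if x ∈ S then deg G x else 0 := by
    intro x
    by_cases hx : x ∈ S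
    · rw [if_pos hx, deg_eq_sum, ← Finset.sum_add_distrib]
      refine Finset.sum_congr rfl fun y _ => ?_
      by_cases hy : y ∈ S <;> by_cases ha : G.Adj x y <;> simp [hx, hy, ha]
    · simp [hx]
  rw [Finset.sum_congr rfl (fun x _ => key x), Finset.sum_ite_mem, Finset.univ_inter]



/-- For a finite undirected graph `G` with double cover `H` and a
simple set `S ⊆ V_H` with `vol_H(S) > 0`, the sets `L = {u : u₁ ∈ S}` and
`R = {u : u₂ ∈ S}` are disjoint and `β_G(L,R) = Φ_H(S)`. -/
theorem statement1 (G : SimpleGraph V) (S : Finset (V ⊕ V))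
    (hsimple : ∀ v : V, ¬(Sum.inl v ∈ S ∧ Sum.inr v ∈ S))
    (hvol : 0 < vol (doubleCover G) S) :
    Disjoint (Finset.univ.filter fun u : V => Sum.inl u ∈ S)
        (Finset.univ.filter fun u : V => Sum.inr u ∈ S) ∧
      bipartiteness G (Finset.univ.filter fun u : V => Sum.inl u ∈ S)
          (Finset.univ.filter fun u : V => Sum.inr u ∈ S)
        = conductance (doubleCover G) S := by
  classical
  set H := doubleCover G with hH
  set L : Finset V := Finset.univ.filter (fun u : V => Sum.inl u ∈ S) with hL
  set R : Finset V := Finset.univ.filter (fun u : V => Sum.inr u ∈ S) with hR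
  have hmemL : ∀ u : V, u ∈ L ↔ Sum.inl u ∈ S := by intro u; simp [hL]
  have hmemR : ∀ u : V, u ∈ R ↔ Sum.inr u ∈ S := by intro u; simp [hR]
  have hdisj : Disjoint L R := by
    rw [Finset.disjoint_left]
    intro u hu1 hu2
    exact hsimple u ⟨(hmemL u).1 hu1, (hmemR u).1 hu2⟩
  refine ⟨hdisj, ?_⟩
  -- volume identity
  have hvolS : vol H S = vol G L + vol G R := by
    have l0 : (∑ x : V ⊕ V, if x ∈ S then deg H x else 0) = vol H S := by
      rw [Finset.sum_ite_mem, Finset.univ_inter, vol]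
    have l1 : (∑ u : V, if Sum.inl u ∈ S then deg G u else 0) = vol G L := by
      simp only [← hmemL]
      rw [Finset.sum_ite_mem, Finset.univ_inter, vol]
    have l2 : (∑ u : V, if Sum.inr u ∈ S then deg G u else 0) = vol G R := by
      simp only [← hmemR]
      rw [Finset.sum_ite_mem, Finset.univ_inter, vol]
    rw [← l0, ← l1, ← l2, Fintype.sum_sum_type]
    simp [deg_dc_inl, deg_dc_inr, hH]
  -- cut within S
  have hcutS : cutEdges H S S = 2 * cutEdges G L R := by
    rw [cutEdges_eq_sum, cutEdges_eq_sum, Fintype.sum_sum_type]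
    have e1 : ∀ u : V, (∑ y : V ⊕ V, if Sum.inl u ∈ S ∧ y ∈ S ∧ H.Adj (Sum.inl u) y then 1 else 0)
        = ∑ v : V, if u ∈ L ∧ v ∈ R ∧ G.Adj u v then 1 else 0 := by
      intro u
      rw [Fintype.sum_sum_type]
      simp [dc_ll, dc_lr, hmemL, hmemR, hH]
    have e2 : ∀ u : V, (∑ y : V ⊕ V, if Sum.inr u ∈ S ∧ y ∈ S ∧ H.Adj (Sum.inr u) y then 1 else 0)
        = ∑ v : V, if v ∈ L ∧ u ∈ R ∧ G.Adj v u then 1 else 0 := by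
      intro u
      rw [Fintype.sum_sum_type]
      simp [dc_rr, dc_rl, hmemL, hmemR, hH, and_comm, and_left_comm]
    rw [Finset.sum_congr rfl (fun u _ => e1 u), Finset.sum_congr rfl (fun u _ => e2 u)]
    rw [Finset.sum_comm (f := fun u v => if v ∈ L ∧ u ∈ R ∧ G.Adj v u then (1:ℕ) else 0)]
    ring
  have hcut : cutEdges H S Sᶜ + 2 * cutEdges G L R = vol H S := by
    rw [← hcutS]; exact cut_compl_add H S
  -- vol H S ≤ vol H Sᶜ
  have hle : vol H S ≤ vol H Sᶜ := by
    have hsub : S.image (Sum.swap) ⊆ Sᶜ := by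
      intro x hx
      rw [Finset.mem_image] at hx
      obtain ⟨a, ha, rfl⟩ := hx
      rw [Finset.mem_compl]
      cases a with
      | inl u => exact fun h => hsimple u ⟨ha, h⟩
      | inr u => exact fun h => hsimple u ⟨h, ha⟩
    calc vol H S = vol H (S.image Sum.swap) := by
          rw [vol, vol, Finset.sum_image (fun a _ b _ h => Sum.swap_leftInverse.injective h)]
          refine Finset.sum_congr rfl fun x _ => ?_
          cases x with
          | inl u => rw [Sum.swap_inl, deg_dc_inl, deg_dc_inr]
          | inr u => rw [Sum.swap_inr, deg_dc_inl, deg_dc_inr]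
      _ ≤ vol H Sᶜ := Finset.sum_le_sum_of_subset hsub
  have hvolLR : vol G (L ∪ R) = vol H S := by
    rw [hvolS]
    simp only [vol, Finset.sum_union hdisj]
  have hpos : (0:ℝ) < (vol H S : ℝ) := by exact_mod_cast hvol
  rw [bipartiteness, conductance, hvolLR]
  rw [min_eq_left (by exact_mod_cast hle)]
  have hcast : (cutEdges H S Sᶜ : ℝ) + 2 * (cutEdges G L R : ℝ) = (vol H S : ℝ) := by
    exact_mod_cast hcut
  field_simp
  linarith

end Paper
end

section
/- Let G be a finite undirected graph with n vertices in which every vertex has positive degree, let H be its double cover with lazy random walk matrix W, and let σ be the simplify operator. Then for every nonnegative vector p ∈ ℝ_{≥0}^{2n}, it holds that σ∘(pW) ⪯ (σ∘p)W. -/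
open Finset

namespace Paper

variable {V : Type*} [Fintype V] [DecidableEq V]

set_option linter.unusedSectionVars false

lemma dc_adj_ll {G : SimpleGraph V} {u v : V} : ¬ (doubleCover G).Adj (Sum.inl u) (Sum.inl v) := by
  simp [doubleCover, SimpleGraph.fromRel_adj]
lemma dc_adj_rr {G : SimpleGraph V} {u v : V} : ¬ (doubleCover G).Adj (Sum.inr u) (Sum.inr v) := by
  simp [doubleCover, SimpleGraph.fromRel_adj]
lemma dc_adj_lr {G : SimpleGraph V} {u v : V} :
    (doubleCover G).Adj (Sum.inl u) (Sum.inr v) ↔ G.Adj u v := by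
  simp [doubleCover, SimpleGraph.fromRel_adj]
lemma dc_adj_rl {G : SimpleGraph V} {u v : V} :
    (doubleCover G).Adj (Sum.inr u) (Sum.inl v) ↔ G.Adj v u := by
  simp [doubleCover, SimpleGraph.fromRel_adj]
lemma dc_deg_l (G : SimpleGraph V) (v : V) : deg (doubleCover G) (Sum.inl v) = deg G v := by
  unfold deg
  have h : {u | (doubleCover G).Adj (Sum.inl v) u} = Sum.inr '' {w | G.Adj v w} := by
    ext x; cases x <;> simp [dc_adj_ll, dc_adj_lr]
  rw [h, Set.ncard_image_of_injective _ Sum.inr_injective]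
lemma dc_deg_r (G : SimpleGraph V) (v : V) : deg (doubleCover G) (Sum.inr v) = deg G v := by
  unfold deg
  have h : {u | (doubleCover G).Adj (Sum.inr v) u} = Sum.inl '' {w | G.Adj v w} := by
    ext x; cases x <;> simp [dc_adj_rr, dc_adj_rl, dc_adj_lr, SimpleGraph.adj_comm]
  rw [h, Set.ncard_image_of_injective _ Sum.inl_injective]

open scoped Classical in
lemma lazy_dc_l (G : SimpleGraph V) (p : V ⊕ V → ℝ) (u : V) :
    lazyWalk (doubleCover G) p (Sum.inl u)
      = (1/2) * p (Sum.inl u)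
        + (1/2) * ∑ w, (if G.Adj w u then p (Sum.inr w) / (deg G w : ℝ) else 0) := by
  unfold lazyWalk
  congr 2
  rw [Fintype.sum_sum_type]
  have h1 : (∑ w, if (doubleCover G).Adj (Sum.inl w) (Sum.inl u) then
      p (Sum.inl w) / (deg (doubleCover G) (Sum.inl w) : ℝ) else 0) = 0 := by
    simp [dc_adj_ll]
  rw [h1, zero_add]
  refine Finset.sum_congr rfl fun w _ => ?_
  rw [dc_deg_r,
    show ((doubleCover G).Adj (Sum.inr w) (Sum.inl u)) = (G.Adj w u) from
      propext (dc_adj_rl.trans (G.adj_comm u w))]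

open scoped Classical in
lemma lazy_dc_r (G : SimpleGraph V) (p : V ⊕ V → ℝ) (u : V) :
    lazyWalk (doubleCover G) p (Sum.inr u)
      = (1/2) * p (Sum.inr u)
        + (1/2) * ∑ w, (if G.Adj w u then p (Sum.inl w) / (deg G w : ℝ) else 0) := by
  unfold lazyWalk
  congr 2
  rw [Fintype.sum_sum_type]
  have h1 : (∑ w, if (doubleCover G).Adj (Sum.inr w) (Sum.inr u) then
      p (Sum.inr w) / (deg (doubleCover G) (Sum.inr w) : ℝ) else 0) = 0 := by
    simp [dc_adj_rr]
  rw [h1, add_zero]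
  refine Finset.sum_congr rfl fun w _ => ?_
  rw [dc_deg_l,
    show ((doubleCover G).Adj (Sum.inl w) (Sum.inr u)) = (G.Adj w u) from
      propext dc_adj_lr]

/-- Let `G` be a graph in which every vertex has positive degree,
`H` its double cover with lazy random walk matrix `W`, and `σ` the simplify operator.
For every nonnegative vector `p`: `σ∘(pW) ⪯ (σ∘p)W` (pointwise). -/
theorem statement4 (G : SimpleGraph V) (hdeg : ∀ v, 0 < deg G v)
    (p : V ⊕ V → ℝ) (hp : ∀ x, 0 ≤ p x) :
    ∀ x, simplify (lazyWalk (doubleCover G) p) x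
      ≤ lazyWalk (doubleCover G) (simplify p) x := by
  classical
  intro x
  cases x with
  | inl u =>
    simp only [simplify, Sum.elim_inl, lazy_dc_l, lazy_dc_r, Sum.elim_inr]
    apply max_le
    · have hs : 0 ≤ ∑ w, (if G.Adj w u then
          max 0 (p (Sum.inr w) - p (Sum.inl w)) / (deg G w : ℝ) else 0) :=
        Finset.sum_nonneg fun w _ => by positivity
      have h1 : (0:ℝ) ≤ max 0 (p (Sum.inl u) - p (Sum.inr u)) := le_max_left _ _
      linarith
    · have key : ∀ w : V, (if G.Adj w u then p (Sum.inr w) / (deg G w : ℝ) else 0)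
          - (if G.Adj w u then p (Sum.inl w) / (deg G w : ℝ) else 0)
          ≤ (if G.Adj w u then max 0 (p (Sum.inr w) - p (Sum.inl w)) / (deg G w : ℝ) else 0) := by
        intro w
        by_cases h : G.Adj w u
        · simp only [if_pos h]
          rw [div_sub_div_same]
          have hc : (0:ℝ) < (deg G w : ℝ) := by exact_mod_cast hdeg w
          exact (div_le_div_iff_of_pos_right hc).mpr (le_max_right _ _)
        · simp [h]
      have hsum : (∑ w, (if G.Adj w u then p (Sum.inr w) / (deg G w : ℝ) else 0))
          - (∑ w, (if G.Adj w u then p (Sum.inl w) / (deg G w : ℝ) else 0))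
          ≤ ∑ w, (if G.Adj w u then max 0 (p (Sum.inr w) - p (Sum.inl w)) / (deg G w : ℝ) else 0) := by
        rw [← Finset.sum_sub_distrib]
        exact Finset.sum_le_sum fun w _ => key w
      have h1 : p (Sum.inl u) - p (Sum.inr u) ≤ max 0 (p (Sum.inl u) - p (Sum.inr u)) :=
        le_max_right _ _
      linarith
  | inr u =>
    simp only [simplify, Sum.elim_inl, lazy_dc_l, lazy_dc_r, Sum.elim_inr]
    apply max_le
    · have hs : 0 ≤ ∑ w, (if G.Adj w u then
          max 0 (p (Sum.inl w) - p (Sum.inr w)) / (deg G w : ℝ) else 0) :=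
        Finset.sum_nonneg fun w _ => by positivity
      have h1 : (0:ℝ) ≤ max 0 (p (Sum.inr u) - p (Sum.inl u)) := le_max_left _ _
      linarith
    · have key : ∀ w : V, (if G.Adj w u then p (Sum.inl w) / (deg G w : ℝ) else 0)
          - (if G.Adj w u then p (Sum.inr w) / (deg G w : ℝ) else 0)
          ≤ (if G.Adj w u then max 0 (p (Sum.inl w) - p (Sum.inr w)) / (deg G w : ℝ) else 0) := by
        intro w
        by_cases h : G.Adj w u
        · simp only [if_pos h]
          rw [div_sub_div_same]
          have hc : (0:ℝ) < (deg G w : ℝ) := by exact_mod_cast hdeg w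
          exact (div_le_div_iff_of_pos_right hc).mpr (le_max_right _ _)
        · simp [h]
      have hsum : (∑ w, (if G.Adj w u then p (Sum.inl w) / (deg G w : ℝ) else 0))
          - (∑ w, (if G.Adj w u then p (Sum.inr w) / (deg G w : ℝ) else 0))
          ≤ ∑ w, (if G.Adj w u then max 0 (p (Sum.inl w) - p (Sum.inr w)) / (deg G w : ℝ) else 0) := by
        rw [← Finset.sum_sub_distrib]
        exact Finset.sum_le_sum fun w _ => key w
      have h1 : p (Sum.inr u) - p (Sum.inl u) ≤ max 0 (p (Sum.inr u) - p (Sum.inl u)) :=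
        le_max_right _ _
      linarith

end Paper
end

section
/- Let G be a finite directed graph with semi-double cover H, and let S ⊆ V_H be a simple set with vol_H(S) > 0 and vol_H(S) ≤ |E_G|. Define L = {u ∈ V_G : u₁ ∈ S} and R = {u ∈ V_G : u₂ ∈ S}. Then F_G(L, R) = Φ_H(S). -/
open Finset

namespace Paper

variable {V : Type*} [Fintype V] [DecidableEq V]

section Aux
open scoped Classical
variable (E : V → V → Prop)

lemma sdc_adj_inl_inr (u v : V) : (semiDoubleCover E).Adj (Sum.inl u) (Sum.inr v) ↔ E u v := by
  simp [semiDoubleCover]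

lemma sdc_adj_inr_inl (u v : V) : (semiDoubleCover E).Adj (Sum.inr v) (Sum.inl u) ↔ E u v := by
  rw [SimpleGraph.adj_comm]; exact sdc_adj_inl_inr E u v

lemma sdc_adj_inl_inl (u v : V) : ¬ (semiDoubleCover E).Adj (Sum.inl u) (Sum.inl v) := by
  simp [semiDoubleCover]

lemma sdc_adj_inr_inr (u v : V) : ¬ (semiDoubleCover E).Adj (Sum.inr u) (Sum.inr v) := by
  simp [semiDoubleCover]

lemma deg_inl (u : V) : deg (semiDoubleCover E) (Sum.inl u) = degOut E u := by
  have h : {x | (semiDoubleCover E).Adj (Sum.inl u) x} = Sum.inr '' {v | E u v} := by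
    ext x
    cases x with
    | inl w => simp [sdc_adj_inl_inl]
    | inr w => simp [sdc_adj_inl_inr]
  rw [deg, h, Set.ncard_image_of_injective _ Sum.inr_injective, degOut]

lemma deg_inr (u : V) : deg (semiDoubleCover E) (Sum.inr u) = degIn E u := by
  have h : {x | (semiDoubleCover E).Adj (Sum.inr u) x} = Sum.inl '' {v | E v u} := by
    ext x
    cases x with
    | inl w => simp [sdc_adj_inr_inl]
    | inr w => simp [sdc_adj_inr_inr]
  rw [deg, h, Set.ncard_image_of_injective _ Sum.inl_injective, degIn]

lemma pairCountFst (A : Finset V) (Q : V → V → Prop) :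
    {p : V × V | p.1 ∈ A ∧ Q p.1 p.2}.ncard = ∑ u ∈ A, {v | Q u v}.ncard := by
  simp only [Set.ncard_eq_toFinset_card', Set.toFinset_setOf, Finset.card_filter]
  rw [Fintype.sum_prod_type]
  have h := Finset.sum_subset (Finset.subset_univ A)
    (f := fun x => ∑ y, if x ∈ A ∧ Q x y then 1 else 0) (fun x _ hx => by simp [hx])
  rw [← h]
  exact Finset.sum_congr rfl fun x hx => Finset.sum_congr rfl fun y _ => by simp [hx]

lemma pairCountSnd (A : Finset V) (Q : V → V → Prop) :
    {p : V × V | p.2 ∈ A ∧ Q p.1 p.2}.ncard = ∑ u ∈ A, {v | Q v u}.ncard := by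
  simp only [Set.ncard_eq_toFinset_card', Set.toFinset_setOf, Finset.card_filter]
  rw [Fintype.sum_prod_type_right]
  have h := Finset.sum_subset (Finset.subset_univ A)
    (f := fun y => ∑ x, if y ∈ A ∧ Q x y then 1 else 0) (fun x _ hx => by simp [hx])
  rw [← h]
  exact Finset.sum_congr rfl fun x hx => Finset.sum_congr rfl fun y _ => by simp [hx]

set_option maxHeartbeats 1000000 in
lemma sdc_vol (S : Finset (V ⊕ V)) :
    vol (semiDoubleCover E) S
      = volOut E (Finset.univ.filter fun u : V => Sum.inl u ∈ S)
      + volIn E (Finset.univ.filter fun u : V => Sum.inr u ∈ S) := by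
  set L := Finset.univ.filter fun u : V => Sum.inl u ∈ S with hL
  set R := Finset.univ.filter fun u : V => Sum.inr u ∈ S with hR
  have hS : S = L.image Sum.inl ∪ R.image Sum.inr := by
    ext x
    cases x with
    | inl u => simp [hL, hR]
    | inr u => simp [hL, hR]
  have hdisj : Disjoint (L.image Sum.inl) (R.image Sum.inr) := by
    rw [Finset.disjoint_left]
    rintro a ha hb
    simp only [Finset.mem_image] at ha hb
    obtain ⟨u, -, rfl⟩ := ha
    obtain ⟨v, -, h⟩ := hb
    exact Sum.inl_ne_inr h.symm
  rw [vol, hS, Finset.sum_union hdisj,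
    Finset.sum_image (fun a _ b _ h => Sum.inl_injective h),
    Finset.sum_image (fun a _ b _ h => Sum.inr_injective h)]
  simp [deg_inl, deg_inr, volOut, volIn]

lemma volOut_split (L R : Finset V) :
    volOut E L = eDir E L R
      + {p : V × V | p.1 ∈ L ∧ p.2 ∉ R ∧ E p.1 p.2}.ncard := by
  have h1 : volOut E L = {p : V × V | p.1 ∈ L ∧ E p.1 p.2}.ncard :=
    (pairCountFst L E).symm
  have h2 : {p : V × V | p.1 ∈ L ∧ E p.1 p.2}
      = {p : V × V | p.1 ∈ L ∧ p.2 ∈ R ∧ E p.1 p.2}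
      ∪ {p : V × V | p.1 ∈ L ∧ p.2 ∉ R ∧ E p.1 p.2} := by
    ext p; by_cases h : p.2 ∈ R <;> simp [h] <;> tauto
  have h3 : Disjoint {p : V × V | p.1 ∈ L ∧ p.2 ∈ R ∧ E p.1 p.2}
      {p : V × V | p.1 ∈ L ∧ p.2 ∉ R ∧ E p.1 p.2} := by
    rw [Set.disjoint_left]; rintro p ⟨-, h, -⟩ ⟨-, h', -⟩; exact h' h
  rw [h1, h2, Set.ncard_union_eq h3 (Set.toFinite _) (Set.toFinite _), eDir]

lemma volIn_split (L R : Finset V) :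
    volIn E R = eDir E L R
      + {p : V × V | p.1 ∉ L ∧ p.2 ∈ R ∧ E p.1 p.2}.ncard := by
  have h1 : volIn E R = {p : V × V | p.2 ∈ R ∧ E p.1 p.2}.ncard :=
    (pairCountSnd R E).symm
  have h2 : {p : V × V | p.2 ∈ R ∧ E p.1 p.2}
      = {p : V × V | p.1 ∈ L ∧ p.2 ∈ R ∧ E p.1 p.2}
      ∪ {p : V × V | p.1 ∉ L ∧ p.2 ∈ R ∧ E p.1 p.2} := by
    ext p; by_cases h : p.1 ∈ L <;> simp [h] <;> tauto
  have h3 : Disjoint {p : V × V | p.1 ∈ L ∧ p.2 ∈ R ∧ E p.1 p.2}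
      {p : V × V | p.1 ∉ L ∧ p.2 ∈ R ∧ E p.1 p.2} := by
    rw [Set.disjoint_left]; rintro p ⟨h, -, -⟩ ⟨h', -, -⟩; exact h' h
  rw [h1, h2, Set.ncard_union_eq h3 (Set.toFinite _) (Set.toFinite _), eDir]

set_option maxHeartbeats 1000000 in
lemma sdc_cut (S : Finset (V ⊕ V)) :
    cutEdges (semiDoubleCover E) S Sᶜ
      = {p : V × V | Sum.inl p.1 ∈ S ∧ Sum.inr p.2 ∉ S ∧ E p.1 p.2}.ncard
      + {p : V × V | Sum.inl p.1 ∉ S ∧ Sum.inr p.2 ∈ S ∧ E p.1 p.2}.ncard := by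
  have hset : {e : (V ⊕ V) × (V ⊕ V) | e.1 ∈ S ∧ e.2 ∈ Sᶜ ∧ (semiDoubleCover E).Adj e.1 e.2}
      = (fun p : V × V => (Sum.inl p.1, Sum.inr p.2)) ''
          {p : V × V | Sum.inl p.1 ∈ S ∧ Sum.inr p.2 ∉ S ∧ E p.1 p.2}
      ∪ (fun p : V × V => (Sum.inr p.2, Sum.inl p.1)) ''
          {p : V × V | Sum.inl p.1 ∉ S ∧ Sum.inr p.2 ∈ S ∧ E p.1 p.2} := by
    ext ⟨x, y⟩
    cases x with
    | inl u =>
      cases y with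
      | inl w => simp [sdc_adj_inl_inl]
      | inr w => simp [sdc_adj_inl_inr]
    | inr u =>
      cases y with
      | inl w => simp only [Set.mem_setOf_eq, Set.mem_union, Set.mem_image, Prod.mk.injEq,
                    Finset.mem_compl, sdc_adj_inr_inl, Sum.inl.injEq, Sum.inr.injEq]; aesop
      | inr w => simp [sdc_adj_inr_inr]
  have hdisj : Disjoint
      ((fun p : V × V => (Sum.inl p.1, Sum.inr p.2)) ''
        {p : V × V | Sum.inl p.1 ∈ S ∧ Sum.inr p.2 ∉ S ∧ E p.1 p.2})
      ((fun p : V × V => (Sum.inr p.2, Sum.inl p.1)) ''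
        {p : V × V | Sum.inl p.1 ∉ S ∧ Sum.inr p.2 ∈ S ∧ E p.1 p.2}) := by
    rw [Set.disjoint_left]
    rintro e ⟨p, -, rfl⟩ ⟨q, -, h⟩
    exact Sum.inl_ne_inr (congrArg Prod.fst h).symm
  have hinj1 : Function.Injective
      (fun p : V × V => ((Sum.inl p.1 : V ⊕ V), (Sum.inr p.2 : V ⊕ V))) := by
    intro p q h
    simp only [Prod.mk.injEq, Sum.inl.injEq, Sum.inr.injEq] at h
    exact Prod.ext h.1 h.2
  have hinj2 : Function.Injective
      (fun p : V × V => ((Sum.inr p.2 : V ⊕ V), (Sum.inl p.1 : V ⊕ V))) := by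
    intro p q h
    simp only [Prod.mk.injEq, Sum.inl.injEq, Sum.inr.injEq] at h
    exact Prod.ext h.2 h.1
  rw [cutEdges, hset, Set.ncard_union_eq hdisj (Set.toFinite _) (Set.toFinite _),
    Set.ncard_image_of_injective _ hinj1, Set.ncard_image_of_injective _ hinj2]

lemma sdc_total (S : Finset (V ⊕ V)) :
    vol (semiDoubleCover E) S + vol (semiDoubleCover E) Sᶜ = 2 * numEdges E := by
  have h : vol (semiDoubleCover E) S + vol (semiDoubleCover E) Sᶜ
      = ∑ x : V ⊕ V, deg (semiDoubleCover E) x := Finset.sum_add_sum_compl S _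
  have hOut : volOut E Finset.univ = numEdges E := by
    rw [volOut]
    simp only [degOut]
    rw [← pairCountFst Finset.univ E, numEdges]
    congr 1
    ext p; simp
  have hIn : volIn E Finset.univ = numEdges E := by
    rw [volIn]
    simp only [degIn]
    rw [← pairCountSnd Finset.univ E, numEdges]
    congr 1
    ext p; simp
  rw [h, Fintype.sum_sum_type]
  simp only [deg_inl, deg_inr]
  rw [show (∑ u : V, degOut E u) = volOut E Finset.univ from rfl,
    show (∑ u : V, degIn E u) = volIn E Finset.univ from rfl, hOut, hIn, two_mul]

end Aux

/-- Let `G` be a finite digraph (edge relation `E`) with semi-double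
cover `H`, and `S ⊆ V_H` simple with `0 < vol_H(S) ≤ |E_G|`. Then with
`L = {u : u₁ ∈ S}` and `R = {u : u₂ ∈ S}` it holds that `F_G(L,R) = Φ_H(S)`. -/
theorem statement9 (E : V → V → Prop) (S : Finset (V ⊕ V))
    (hsimple : ∀ v : V, ¬(Sum.inl v ∈ S ∧ Sum.inr v ∈ S))
    (h0 : 0 < vol (semiDoubleCover E) S)
    (h1 : vol (semiDoubleCover E) S ≤ numEdges E) :
    flowRatio E (Finset.univ.filter fun u : V => Sum.inl u ∈ S)
        (Finset.univ.filter fun u : V => Sum.inr u ∈ S)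
      = conductance (semiDoubleCover E) S := by
  classical
  set L := Finset.univ.filter fun u : V => Sum.inl u ∈ S with hLdef
  set R := Finset.univ.filter fun u : V => Sum.inr u ∈ S with hRdef
  have hvol : vol (semiDoubleCover E) S = volOut E L + volIn E R := sdc_vol E S
  have hOut : volOut E L = eDir E L R
      + {p : V × V | Sum.inl p.1 ∈ S ∧ Sum.inr p.2 ∉ S ∧ E p.1 p.2}.ncard := by
    rw [volOut_split E L R]
    congr 2
    ext p; simp [hLdef, hRdef]
  have hIn : volIn E R = eDir E L R
      + {p : V × V | Sum.inl p.1 ∉ S ∧ Sum.inr p.2 ∈ S ∧ E p.1 p.2}.ncard := by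
    rw [volIn_split E L R]
    congr 2
    ext p; simp [hLdef, hRdef]
  have hcut := sdc_cut E S
  have hkey : cutEdges (semiDoubleCover E) S Sᶜ + 2 * eDir E L R
      = vol (semiDoubleCover E) S := by omega
  have htot := sdc_total E S
  have hmin : vol (semiDoubleCover E) S ≤ vol (semiDoubleCover E) Sᶜ := by omega
  have hvS : (0:ℝ) < (vol (semiDoubleCover E) S : ℝ) := by exact_mod_cast h0
  have hvolR : (volOut E L : ℝ) + (volIn E R : ℝ)
      = (vol (semiDoubleCover E) S : ℝ) := by exact_mod_cast hvol.symm
  have hkeyR : (cutEdges (semiDoubleCover E) S Sᶜ : ℝ) + 2 * (eDir E L R : ℝ)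
      = (vol (semiDoubleCover E) S : ℝ) := by exact_mod_cast hkey
  rw [flowRatio, conductance, min_eq_left (by exact_mod_cast hmin), hvolR]
  field_simp
  linarith


end Paper
end
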